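/- Let A ∈ ℂ^{m×m} be Hermitian, B ∈ ℂ^{m×n}, and suppose BXB* ⪰ A has a Hermitian solution. Then the minimum of rank(X) over all Hermitian solutions X equals i₊(A), the number of positive eigenvalues of A; moreover there always exists a positive definite Hermitian solution X ≻ 0. -/

import Mathlib

open Matrix
open scoped ComplexOrder

noncomputable def iPos {n : Type*} [Fintype n] [DecidableEq n] (A : Matrix n n ℂ) : ℕ :=
  if h : A.IsHermitian then Nat.card {i // 0 < h.eigenvalues i} else 0

noncomputable def iNeg {n : Type*} [Fintype n] [DecidableEq n] (A : Matrix n n ℂ) : ℕ :=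
  if h : A.IsHermitian then Nat.card {i // h.eigenvalues i < 0} else 0

namespace LMIHelper

variable {m : ℕ} {K : Matrix (Fin m) (Fin m) ℂ}

noncomputable def spec (hK : K.IsHermitian) (g : Fin m → ℝ) : Matrix (Fin m) (Fin m) ℂ :=
  (hK.eigenvectorUnitary : Matrix (Fin m) (Fin m) ℂ) * diagonal (fun i => (g i : ℂ)) *
    (star (hK.eigenvectorUnitary : Matrix (Fin m) (Fin m) ℂ))

variable (hK : K.IsHermitian)

lemma spec_eigenvalues : spec hK hK.eigenvalues = K := by
  rw [spec]; exact_mod_cast hK.spectral_theorem.symm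

lemma spec_conjTranspose (g : Fin m → ℝ) : (spec hK g)ᴴ = spec hK g := by
  have : (diagonal (fun i => ((g i : ℂ))))ᴴ = diagonal (fun i => ((g i : ℂ))) := by
    rw [diagonal_conjTranspose]
    have hsf : (star fun i => ((g i : ℂ))) = fun i => ((g i : ℂ)) := by
      funext i
      rw [Pi.star_apply, Complex.star_def, Complex.conj_ofReal]
    rw [hsf]
  simp [spec, Matrix.mul_assoc, conjTranspose_mul, this, star_eq_conjTranspose]

lemma spec_mul (g h : Fin m → ℝ) : spec hK g * spec hK h = spec hK (g * h) := by
  have hU : (star (hK.eigenvectorUnitary : Matrix (Fin m) (Fin m) ℂ)) *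
      (hK.eigenvectorUnitary : Matrix (Fin m) (Fin m) ℂ) = 1 :=
    (Matrix.mem_unitaryGroup_iff').mp (hK.eigenvectorUnitary).2
  simp only [spec, Matrix.mul_assoc]
  rw [← Matrix.mul_assoc (star _) _ , hU, Matrix.one_mul, ← Matrix.mul_assoc (diagonal _),
    diagonal_mul_diagonal]
  have : (fun i => ((g i : ℂ)) * ((h i : ℂ))) = fun i => (((g * h) i : ℝ) : ℂ) := by
    funext i; push_cast [Pi.mul_apply]; ring
  rw [this]

lemma spec_one : spec hK 1 = 1 := by
  have hU : (hK.eigenvectorUnitary : Matrix (Fin m) (Fin m) ℂ) *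
      (star (hK.eigenvectorUnitary : Matrix (Fin m) (Fin m) ℂ)) = 1 :=
    (Matrix.mem_unitaryGroup_iff).mp (hK.eigenvectorUnitary).2
  simp only [spec, Pi.one_apply, Complex.ofReal_one, diagonal_one, Matrix.mul_one, hU]

lemma spec_sub (g h : Fin m → ℝ) : spec hK g - spec hK h = spec hK (g - h) := by
  simp only [spec, ← Matrix.sub_mul, ← Matrix.mul_sub, diagonal_sub]
  have : (fun i => ((g i : ℂ)) - ((h i : ℂ))) = fun i => (((g - h) i : ℝ) : ℂ) := by
    funext i; push_cast [Pi.sub_apply]; ring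
  rw [this]

lemma spec_posSemidef {g : Fin m → ℝ} (hg : ∀ i, 0 ≤ g i) : (spec hK g).PosSemidef := by
  have hd : Matrix.PosSemidef (diagonal (fun i => ((g i : ℂ)))) := by
    refine Matrix.PosSemidef.diagonal fun i => ?_
    simpa using Complex.zero_le_real.mpr (hg i)
  have := hd.mul_mul_conjTranspose_same (hK.eigenvectorUnitary : Matrix (Fin m) (Fin m) ℂ)
  simpa [spec, star_eq_conjTranspose, Matrix.mul_assoc] using this

lemma spec_rank_le (g : Fin m → ℝ) : (spec hK g).rank ≤ Fintype.card {i // g i ≠ 0} := by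
  have h1 : (spec hK g).rank ≤ (diagonal (fun i => ((g i : ℂ)))).rank := by
    rw [spec]
    exact (Matrix.rank_mul_le_left _ _).trans (Matrix.rank_mul_le_right _ _)
  rw [Matrix.rank_diagonal] at h1
  refine h1.trans_eq (Fintype.card_congr (Equiv.subtypeEquivRight fun i => ?_))
  simp



lemma entry_conjTranspose_mul (L : Matrix (Fin m) (Fin m) ℂ) (i : Fin m) :
    (Lᴴ * L) i i = ((∑ k, Complex.normSq (L k i) : ℝ) : ℂ) := by
  simp [Matrix.mul_apply, Complex.normSq_eq_conj_mul_self]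

lemma col_eq_zero_of_entry_zero {L : Matrix (Fin m) (Fin m) ℂ} {i : Fin m}
    (h : (Lᴴ * L) i i = 0) : ∀ k, L k i = 0 := by
  rw [entry_conjTranspose_mul] at h
  have hsum : (∑ k, Complex.normSq (L k i) : ℝ) = 0 := by exact_mod_cast h
  intro k
  have hk := (Finset.sum_eq_zero_iff_of_nonneg (fun j _ => Complex.normSq_nonneg _)).mp hsum k
    (Finset.mem_univ k)
  exact Complex.normSq_eq_zero.mp hk

noncomputable def posV (hK : K.IsHermitian) :
    Matrix (Fin m) {i // 0 < hK.eigenvalues i} ℂ :=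
  (hK.eigenvectorUnitary : Matrix (Fin m) (Fin m) ℂ).submatrix id Subtype.val

lemma posV_conj : (posV hK)ᴴ * K * (posV hK) =
    diagonal (fun j : {i // 0 < hK.eigenvalues i} => (hK.eigenvalues j.val : ℂ)) := by
  have h : star (hK.eigenvectorUnitary : Matrix (Fin m) (Fin m) ℂ) * K *
      (hK.eigenvectorUnitary : Matrix (Fin m) (Fin m) ℂ) =
      diagonal (RCLike.ofReal ∘ hK.eigenvalues) := by
    have := hK.conjStarAlgAut_star_eigenvectorUnitary
    simpa [Unitary.conjStarAlgAut_apply] using this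
  set v : {i // 0 < hK.eigenvalues i} → Fin m := Subtype.val with hv
  have hvinj : Function.Injective v := Subtype.val_injective
  set U : Matrix (Fin m) (Fin m) ℂ := (hK.eigenvectorUnitary : Matrix (Fin m) (Fin m) ℂ)
    with hU
  have h1 : (posV hK)ᴴ = (star U).submatrix v id := by
    rw [posV, conjTranspose_submatrix, star_eq_conjTranspose]
  have e1 : (star U * K).submatrix v id = (star U).submatrix v id * K := by
    rw [Matrix.submatrix_mul (star U) K v id id Function.bijective_id,
      Matrix.submatrix_id_id]
  have e2 : (star U * K * U).submatrix v v = (star U * K).submatrix v id *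
      U.submatrix id v :=
    Matrix.submatrix_mul (star U * K) U v id v Function.bijective_id
  rw [h1, posV, ← e1, ← e2, h, Matrix.submatrix_diagonal _ v hvinj]
  rfl

lemma posV_posDef : ((posV hK)ᴴ * K * (posV hK)).PosDef := by
  rw [posV_conj]
  refine Matrix.PosDef.diagonal fun j => ?_
  exact_mod_cast Complex.zero_lt_real.mpr j.2

lemma card_le_posCard {ι : Type*} [Fintype ι] (V : Matrix (Fin m) ι ℂ)
    (hPD : (Vᴴ * K * V).PosDef) :
    Fintype.card ι ≤ Fintype.card {i // 0 < hK.eigenvalues i} := by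
  by_contra hlt
  push_neg at hlt
  set U : Matrix (Fin m) (Fin m) ℂ := (hK.eigenvectorUnitary : Matrix (Fin m) (Fin m) ℂ) with hU
  set W : Matrix (Fin m) ι ℂ := star U * V with hW
  set Q : Matrix {i // 0 < hK.eigenvalues i} ι ℂ := W.submatrix Subtype.val id with hQ
  have hnotinj : ¬ Function.Injective Q.mulVecLin := by
    intro hinj
    have hle := LinearMap.finrank_le_finrank_of_injective hinj
    simp only [Module.finrank_fintype_fun_eq_card] at hle
    omega
  rw [Function.not_injective_iff] at hnotinj
  obtain ⟨x, y, hxy, hne⟩ := hnotinj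
  set z : ι → ℂ := x - y with hz
  have hz0 : z ≠ 0 := sub_ne_zero_of_ne hne
  have hxy' : Q *ᵥ x = Q *ᵥ y := by simpa [Matrix.mulVecLin_apply] using hxy
  have hQz : Q *ᵥ z = 0 := by
    rw [hz, Matrix.mulVec_sub, hxy', sub_self]
  have hw : ∀ j : {i // 0 < hK.eigenvalues i}, (W *ᵥ z) j.val = 0 := by
    intro j
    have : (Q *ᵥ z) j = (W *ᵥ z) j.val := rfl
    rw [← this, hQz]
    rfl
  have hzero : ∀ i : Fin m, 0 < hK.eigenvalues i → (W *ᵥ z) i = 0 := fun i hi => hw ⟨i, hi⟩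
  -- compute the quadratic form
  have hform : star z ⬝ᵥ ((Vᴴ * K * V) *ᵥ z)
      = ∑ i, (hK.eigenvalues i : ℂ) * ((starRingEnd ℂ) ((W *ᵥ z) i) * (W *ᵥ z) i) := by
    have hKeq : Vᴴ * K * V = Wᴴ * diagonal (fun i => (hK.eigenvalues i : ℂ)) * W := by
      have hspec : K = U * diagonal (fun i => (hK.eigenvalues i : ℂ)) * star U := by
        exact_mod_cast hK.spectral_theorem
      have h2 : (star U)ᴴ = U := by
        rw [star_eq_conjTranspose, conjTranspose_conjTranspose]
      conv_lhs => rw [hspec]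
      rw [hW, conjTranspose_mul, h2]
      simp only [Matrix.mul_assoc]
    rw [hKeq]
    rw [← Matrix.mulVec_mulVec, ← Matrix.mulVec_mulVec]
    rw [Matrix.dotProduct_mulVec (star z) Wᴴ, ← Matrix.star_mulVec]
    simp only [dotProduct, Matrix.mulVec_diagonal, Pi.star_apply, Complex.star_def]
    refine Finset.sum_congr rfl fun i _ => ?_
    ring
  have hle : star z ⬝ᵥ ((Vᴴ * K * V) *ᵥ z) ≤ 0 := by
    rw [hform]
    refine Finset.sum_nonpos fun i _ => ?_
    by_cases hi : 0 < hK.eigenvalues i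
    · rw [hzero i hi]; simp
    · push_neg at hi
      have hterm : (hK.eigenvalues i : ℂ) * ((starRingEnd ℂ) ((W *ᵥ z) i) * (W *ᵥ z) i)
          = ((hK.eigenvalues i * Complex.normSq ((W *ᵥ z) i) : ℝ) : ℂ) := by
        push_cast
        rw [Complex.normSq_eq_conj_mul_self]
      rw [hterm]
      have : (hK.eigenvalues i * Complex.normSq ((W *ᵥ z) i) : ℝ) ≤ 0 :=
        mul_nonpos_iff.mpr (Or.inr ⟨hi, Complex.normSq_nonneg _⟩)
      exact_mod_cast Complex.real_le_real.mpr this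
  exact absurd ((hPD.dotProduct_mulVec_pos hz0).trans_le hle) (lt_irrefl 0)

lemma posCard_le_rank {n : ℕ} {A : Matrix (Fin m) (Fin m) ℂ} (hA : A.IsHermitian)
    {B : Matrix (Fin m) (Fin n) ℂ} {X : Matrix (Fin n) (Fin n) ℂ}
    (hsol : (B * X * Bᴴ - A).PosSemidef) :
    Fintype.card {i // 0 < hA.eigenvalues i} ≤ X.rank := by
  set V := posV hA with hV
  have hsum : Vᴴ * (B * X * Bᴴ) * V = Vᴴ * A * V + Vᴴ * (B * X * Bᴴ - A) * V := by
    rw [Matrix.mul_sub, Matrix.sub_mul]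
    abel
  have hPD : (Vᴴ * (B * X * Bᴴ) * V).PosDef := by
    rw [hsum]
    exact Matrix.PosDef.add_posSemidef (posV_posDef hA) (hsol.conjTranspose_mul_mul_same V)
  have hcard : (Vᴴ * (B * X * Bᴴ) * V).rank = Fintype.card {i // 0 < hA.eigenvalues i} :=
    Matrix.rank_of_isUnit _ hPD.isUnit
  have hle : (Vᴴ * (B * X * Bᴴ) * V).rank ≤ X.rank := by
    have hgr : Vᴴ * (B * X * Bᴴ) * V = ((Vᴴ * B) * X) * (Bᴴ * V) := by
      simp only [Matrix.mul_assoc]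
    rw [hgr]
    exact (Matrix.rank_mul_le_left _ _).trans (Matrix.rank_mul_le_right _ _)
  omega

lemma quad_posSemidef {n : ℕ} {X : Matrix (Fin n) (Fin n) ℂ} (hX : X.IsHermitian) :
    (X * X - X + 1).PosSemidef := by
  set W : Matrix (Fin n) (Fin n) ℂ := X - (1/2 : ℂ) • 1 with hW
  have hkey : X * X - X + 1 = Wᴴ * W + (3/4 : ℂ) • 1 := by
    have hWc : Wᴴ = W := by
      rw [hW, conjTranspose_sub, hX, conjTranspose_smul, conjTranspose_one]
      norm_num
    rw [hWc, hW]
    simp only [Matrix.sub_mul, Matrix.mul_sub, Matrix.smul_mul, Matrix.mul_smul,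
      Matrix.mul_one, Matrix.one_mul, smul_smul]
    module
  rw [hkey]
  refine Matrix.PosSemidef.add (Matrix.posSemidef_conjTranspose_mul_self W) ?_
  rw [Matrix.smul_one_eq_diagonal]
  refine Matrix.PosSemidef.diagonal fun i => ?_
  show (0:ℂ) ≤ 3/4
  simpa using Complex.real_le_real.mpr (by norm_num : (0:ℝ) ≤ 3/4)

lemma mulL {a b c : Matrix (Fin m) (Fin m) ℂ} (h : a = b) : a * c = b * c := by rw [h]
lemma mulR {a b c : Matrix (Fin m) (Fin m) ℂ} (h : a = b) : c * a = c * b := by rw [h]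
lemma subR {a b c : Matrix (Fin m) (Fin m) ℂ} (h : a = b) : c - a = c - b := by rw [h]
lemma chain {a b c : Matrix (Fin m) (Fin m) ℂ} (h : a * b = c) (d : Matrix (Fin m) (Fin m) ℂ) :
    a * (b * d) = c * d := by rw [← Matrix.mul_assoc, h]

set_option maxHeartbeats 1000000 in
lemma exists_low_rank_solution {n : ℕ} {A : Matrix (Fin m) (Fin m) ℂ} (hA : A.IsHermitian)
    {B1 : Matrix (Fin m) (Fin n) ℂ} (hM : (B1 * B1ᴴ - A).PosSemidef) :
    ∃ X1 : Matrix (Fin n) (Fin n) ℂ, X1.IsHermitian ∧ (B1 * X1 * B1ᴴ - A).PosSemidef ∧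
      X1.rank ≤ Fintype.card {i // 0 < hA.eigenvalues i} := by
  classical
  obtain ⟨N, hNdef⟩ : ∃ x, x = B1 * B1ᴴ := ⟨_, rfl⟩
  have hN : N.IsHermitian := by rw [hNdef]; exact Matrix.isHermitian_mul_conjTranspose_self B1
  obtain ⟨M, hMdef⟩ : ∃ x, x = B1 * B1ᴴ - A := ⟨_, rfl⟩
  have hMps : M.PosSemidef := by rw [hMdef]; exact hM
  have hMH : M.IsHermitian := hMps.1
  have hNA : A = N - M := by rw [hMdef, hNdef]; abel
  obtain ⟨μ, hμ⟩ : ∃ x, x = hN.eigenvalues := ⟨_, rfl⟩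
  obtain ⟨Npinv, hNpinv⟩ : ∃ x, x = spec hN (fun i => (μ i)⁻¹) := ⟨_, rfl⟩
  obtain ⟨P, hP⟩ : ∃ x, x = spec hN (fun i => μ i * (μ i)⁻¹) := ⟨_, rfl⟩
  have hNspec : N = spec hN μ := by rw [hμ]; exact (spec_eigenvalues hN).symm
  have hNpH : Npinvᴴ = Npinv := by rw [hNpinv]; exact spec_conjTranspose hN _
  have hNNp : N * Npinv = P := by
    have e : (μ * fun i => (μ i)⁻¹) = fun i => μ i * (μ i)⁻¹ := by funext i; rfl
    rw [mulL hNspec, hNpinv, spec_mul, e, hP]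
  have hNpN : Npinv * N = P := by
    have e : ((fun i => (μ i)⁻¹) * μ) = fun i => μ i * (μ i)⁻¹ := by
      funext i; exact mul_comm _ _
    rw [mulR hNspec, hNpinv, spec_mul, e, hP]
  have hPH : Pᴴ = P := by rw [hP]; exact spec_conjTranspose hN _
  have hPP : P * P = P := by
    have e : ((fun i => μ i * (μ i)⁻¹) * fun i => μ i * (μ i)⁻¹)
        = fun i => μ i * (μ i)⁻¹ := by
      funext i
      show (μ i * (μ i)⁻¹) * (μ i * (μ i)⁻¹) = μ i * (μ i)⁻¹
      by_cases h : μ i = 0 <;> field_simp [h]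
    rw [hP, spec_mul, e]
  have hNP : N * P = N := by
    have e : (μ * fun i => μ i * (μ i)⁻¹) = μ := by
      funext i
      show μ i * (μ i * (μ i)⁻¹) = μ i
      by_cases h : μ i = 0 <;> field_simp [h]
    rw [mulL hNspec, hP, spec_mul, e, ← hNspec]
  obtain ⟨Q, hQdef⟩ : ∃ x, x = 1 - P := ⟨_, rfl⟩
  have hQH : Qᴴ = Q := by rw [hQdef, conjTranspose_sub, conjTranspose_one, hPH]
  have hNQ : N * Q = 0 := by rw [hQdef, Matrix.mul_sub, Matrix.mul_one, hNP, sub_self]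
  have hQN : Q * N = 0 := by
    have h2 := congrArg conjTranspose hNQ
    rwa [conjTranspose_mul, hQH, hN.eq, conjTranspose_zero] at h2
  have hQP : Q * P = 0 := by rw [hQdef, Matrix.sub_mul, Matrix.one_mul, hPP, sub_self]
  have hPQ : P * Q = 0 := by rw [hQdef, Matrix.mul_sub, Matrix.mul_one, hPP, sub_self]
  have hQQ : Q * Q = Q := by
    have e : (1 - P) * (1 - P) = 1 - P - P + P * P := by noncomm_ring
    rw [hQdef, e, hPP]
    abel
  -- square root of M
  obtain ⟨R, hRdef⟩ : ∃ x, x = spec hMH (fun i => Real.sqrt (hMH.eigenvalues i)) := ⟨_, rfl⟩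
  have hRH : Rᴴ = R := by rw [hRdef]; exact spec_conjTranspose hMH _
  have hRR : R * R = M := by
    have e : ((fun i => Real.sqrt (hMH.eigenvalues i)) * fun i => Real.sqrt (hMH.eigenvalues i))
        = hMH.eigenvalues := by
      funext i
      exact Real.mul_self_sqrt (hMps.eigenvalues_nonneg i)
    rw [hRdef, spec_mul, e, spec_eigenvalues]
  -- T and its pseudoinverse
  obtain ⟨T, hTdef⟩ : ∃ x, x = Q * M * Q := ⟨_, rfl⟩
  have hTH : T.IsHermitian := by
    rw [Matrix.IsHermitian, hTdef, conjTranspose_mul, conjTranspose_mul, hQH, hMH.eq,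
      Matrix.mul_assoc]
  obtain ⟨τ, hτ⟩ : ∃ x, x = hTH.eigenvalues := ⟨_, rfl⟩
  obtain ⟨Tpinv, hTpinv⟩ : ∃ x, x = spec hTH (fun i => (τ i)⁻¹) := ⟨_, rfl⟩
  have hTspec : T = spec hTH τ := by rw [hτ]; exact (spec_eigenvalues hTH).symm
  have hTP : T * P = 0 := by
    rw [hTdef]
    simp only [Matrix.mul_assoc]
    rw [hQP, Matrix.mul_zero, Matrix.mul_zero]
  have hTpP : Tpinv * P = 0 := by
    have h2 : Tpinv = Tpinv * Tpinv * T := by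
      have e : (((fun i => (τ i)⁻¹) * fun i => (τ i)⁻¹) * τ) = fun i => (τ i)⁻¹ := by
        funext i
        show (τ i)⁻¹ * (τ i)⁻¹ * τ i = (τ i)⁻¹
        by_cases h : τ i = 0 <;> field_simp [h]
      rw [hTpinv, mulR hTspec, spec_mul, spec_mul, e]
    rw [mulL h2, Matrix.mul_assoc, hTP, Matrix.mul_zero]
  have hTTpT : T * (Tpinv * T) = T := by
    have e : ((τ * fun i => (τ i)⁻¹) * τ) = τ := by
      funext i
      show τ i * (τ i)⁻¹ * τ i = τ i
      by_cases h : τ i = 0 <;> field_simp [h]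
    rw [← Matrix.mul_assoc T Tpinv T, mulL hTspec, mulR hTspec, hTpinv, spec_mul, spec_mul, e,
      ← hTspec]
  -- P M Q (Tpinv T) = P M Q
  have hZ : R * (Q * (1 - Tpinv * T)) = 0 := by
    have h0 : R * (Q * (1 - Tpinv * T)) = R * Q * (1 - Tpinv * T) := by
      rw [Matrix.mul_assoc]
    rw [h0, ← conjTranspose_mul_self_eq_zero]
    have hc : (R * Q * (1 - Tpinv * T))ᴴ = (1 - Tpinv * T)ᴴ * (Q * R) := by
      rw [conjTranspose_mul, conjTranspose_mul, hRH, hQH]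
    rw [hc]
    have hmid : Q * R * (R * Q * (1 - Tpinv * T)) = T * (1 - Tpinv * T) := by
      rw [hTdef]
      simp only [Matrix.mul_assoc]
      rw [chain hRR]
    rw [Matrix.mul_assoc, hmid, Matrix.mul_sub, Matrix.mul_one, hTTpT, sub_self,
      Matrix.mul_zero]
  have hPMQTp : P * M * Q * (Tpinv * T) = P * M * Q := by
    have h2 : P * M * Q * (1 - Tpinv * T) = 0 := by
      have h3 : P * M * Q * (1 - Tpinv * T) = P * (R * (R * (Q * (1 - Tpinv * T)))) := by
        rw [chain hRR]
        simp only [Matrix.mul_assoc]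
      rw [h3, hZ, Matrix.mul_zero, Matrix.mul_zero]
    rw [Matrix.mul_sub, Matrix.mul_one] at h2
    exact (sub_eq_zero.mp h2).symm
  obtain ⟨Wt, hWt⟩ : ∃ x, x = -(P * M * Q * Tpinv) := ⟨_, rfl⟩
  have hWtT : Wt * T = -(P * M * Q) := by
    rw [hWt, Matrix.neg_mul, Matrix.mul_assoc (P * M * Q) Tpinv T, hPMQTp]
  have hWtP : Wt * P = 0 := by
    rw [hWt, Matrix.neg_mul, Matrix.mul_assoc (P * M * Q) Tpinv P, hTpP, Matrix.mul_zero,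
      neg_zero]
  have hPWt : P * Wt = Wt := by
    rw [hWt, Matrix.mul_neg]
    have h2 : P * (P * M * Q * Tpinv) = P * M * Q * Tpinv := by
      simp only [Matrix.mul_assoc]
      rw [chain hPP]
    rw [h2]
  have hQWt : Q * Wt = 0 := by
    rw [hWt, Matrix.mul_neg]
    have h2 : Q * (P * M * Q * Tpinv) = 0 := by
      simp only [Matrix.mul_assoc]
      rw [chain hQP, Matrix.zero_mul]
    rw [h2, neg_zero]
  have hWtQ : Wt * Q = Wt := by
    rw [hQdef, Matrix.mul_sub, Matrix.mul_one, hWtP, sub_zero]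
  have hWtWt : Wt * Wt = 0 := by
    rw [show Wt * Wt = Wt * (P * Wt) from by rw [hPWt], ← Matrix.mul_assoc, hWtP,
      Matrix.zero_mul]
  have hWtHQ : Wtᴴ * Q = 0 := by
    have h2 := congrArg conjTranspose hQWt
    rwa [conjTranspose_mul, hQH, conjTranspose_zero] at h2
  obtain ⟨G, hG⟩ : ∃ x, x = 1 + Wt := ⟨_, rfl⟩
  obtain ⟨K, hKdef⟩ : ∃ x, x = G * A * Gᴴ := ⟨_, rfl⟩
  have hKH : K.IsHermitian := by
    rw [Matrix.IsHermitian, hKdef, conjTranspose_mul, conjTranspose_mul,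
      conjTranspose_conjTranspose, hA.eq, Matrix.mul_assoc]
  have hGQ : Gᴴ * Q = Q := by
    rw [hG, conjTranspose_add, conjTranspose_one, Matrix.add_mul, Matrix.one_mul, hWtHQ,
      add_zero]
  have hPKQ : P * K * Q = 0 := by
    have hAQ : A * Q = -(M * Q) := by
      rw [mulL hNA, Matrix.sub_mul, hNQ, zero_sub]
    have hPG : P * G = P + Wt := by
      rw [hG, Matrix.mul_add, Matrix.mul_one, hPWt]
    have hWtMQ : Wt * (M * Q) = -(P * (M * Q)) := by
      have h5 : Wt * (M * Q) = Wt * T := by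
        rw [hTdef, Matrix.mul_assoc Q M Q, ← Matrix.mul_assoc Wt Q (M * Q), hWtQ]
      rw [h5, hWtT, ← Matrix.mul_assoc]
    calc P * K * Q = (P * G) * A * (Gᴴ * Q) := by
          rw [hKdef]; simp only [Matrix.mul_assoc]
    _ = (P + Wt) * (A * Q) := by rw [hPG, hGQ, Matrix.mul_assoc]
    _ = -((P + Wt) * (M * Q)) := by rw [hAQ, Matrix.mul_neg]
    _ = -(P * (M * Q) + Wt * (M * Q)) := by rw [Matrix.add_mul]
    _ = 0 := by rw [hWtMQ, add_neg_cancel, neg_zero]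
  have hQKP : Q * K * P = 0 := by
    have h2 := congrArg conjTranspose hPKQ
    simp only [conjTranspose_mul, conjTranspose_zero, hQH, hPH, hKH.eq] at h2
    rw [Matrix.mul_assoc]
    exact h2
  have hPQ1 : P + Q = 1 := by rw [hQdef]; abel
  have hP1Q : P = 1 - Q := by rw [hQdef]; abel
  have hKQ : K * Q = Q * K * Q := by
    have h2 : K * Q = (P + Q) * K * Q := by rw [hPQ1, Matrix.one_mul]
    rw [h2, Matrix.add_mul, Matrix.add_mul, hPKQ, zero_add]
  have hQKQ : Q * K * Q = -T := by
    have hQG : Q * G = Q := by rw [hG, Matrix.mul_add, Matrix.mul_one, hQWt, add_zero]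
    calc Q * K * Q = (Q * G) * A * (Gᴴ * Q) := by
          rw [hKdef]; simp only [Matrix.mul_assoc]
    _ = Q * A * Q := by rw [hQG, hGQ]
    _ = Q * (N - M) * Q := by rw [← hNA]
    _ = -T := by
      rw [Matrix.mul_sub, Matrix.sub_mul, hQN, Matrix.zero_mul, zero_sub, hTdef]
  -- positive part of K
  obtain ⟨κ, hκ⟩ : ∃ x, x = hKH.eigenvalues := ⟨_, rfl⟩
  obtain ⟨Kp, hKp⟩ : ∃ x, x = spec hKH (fun i => max (κ i) 0) := ⟨_, rfl⟩
  have hKpH : Kpᴴ = Kp := by rw [hKp]; exact spec_conjTranspose hKH _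
  have hKspec : K = spec hKH κ := by rw [hκ]; exact (spec_eigenvalues hKH).symm
  have hKpKps : (Kp - K).PosSemidef := by
    have e : Kp - K = spec hKH ((fun i => max (κ i) 0) - κ) := by
      rw [hKp, subR hKspec, spec_sub]
    rw [e]
    refine spec_posSemidef hKH fun i => ?_
    simp only [Pi.sub_apply]
    have := le_max_left (κ i) 0
    have := le_max_right (κ i) 0
    linarith
  -- Kp * Q = 0
  obtain ⟨U, hU⟩ : ∃ x, x = (hKH.eigenvectorUnitary : Matrix (Fin m) (Fin m) ℂ) := ⟨_, rfl⟩
  have hU1 : star U * U = 1 := by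
    rw [hU]; exact Matrix.mem_unitaryGroup_iff'.mp hKH.eigenvectorUnitary.2
  have hU2 : U * star U = 1 := by
    rw [hU]; exact Matrix.mem_unitaryGroup_iff.mp hKH.eigenvectorUnitary.2
  have hsUH : (star U)ᴴ = U := by
    rw [star_eq_conjTranspose, conjTranspose_conjTranspose]
  have hUH : Uᴴ = star U := (star_eq_conjTranspose U).symm
  obtain ⟨Dk, hDk⟩ : ∃ x, x = diagonal (fun i => ((κ i : ℝ) : ℂ)) := ⟨_, rfl⟩
  obtain ⟨Dp, hDp⟩ : ∃ x, x = diagonal (fun i => ((max (κ i) 0 : ℝ) : ℂ)) := ⟨_, rfl⟩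
  have hKspec2 : K = U * Dk * star U := by rw [hKspec, hU, hDk]; rfl
  have hKpspec : Kp = U * Dp * star U := by rw [hKp, hU, hDp]; rfl
  obtain ⟨Q', hQ'⟩ : ∃ x, x = star U * Q * U := ⟨_, rfl⟩
  have hQ'H : Q'ᴴ = Q' := by
    rw [hQ', conjTranspose_mul, conjTranspose_mul, hsUH, hQH, hUH, Matrix.mul_assoc]
  have hQ'Q' : Q' * Q' = Q' := by
    have h2 : Q' * Q' = star U * (Q * ((U * star U) * (Q * U))) := by
      rw [hQ']; simp only [Matrix.mul_assoc]
    rw [h2, hU2, Matrix.one_mul, chain hQQ, hQ', Matrix.mul_assoc]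
  have hsUK : star U * K = Dk * star U := by
    rw [mulR hKspec2, ← Matrix.mul_assoc, ← Matrix.mul_assoc, hU1, Matrix.one_mul]
  have hsUQ : star U * Q = Q' * star U := by
    have h2 : Q' * star U = star U * Q * (U * star U) := by
      rw [hQ']; simp only [Matrix.mul_assoc]
    rw [h2, hU2, Matrix.mul_one]
  obtain ⟨L, hL⟩ : ∃ x, x = R * (Q * U) := ⟨_, rfl⟩
  have hLH : Lᴴ = star U * Q * R := by
    rw [hL, conjTranspose_mul, conjTranspose_mul, hRH, hQH, hUH, Matrix.mul_assoc]
  have hDkQ' : Dk * Q' = -(Lᴴ * L) := by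
    have h2 : Dk * Q' = star U * (K * Q) * U := by
      have h2a : star U * (K * Q) * U = Dk * Q' := by
        simp only [Matrix.mul_assoc]
        rw [chain hsUK, hQ']
        simp only [Matrix.mul_assoc]
      exact h2a.symm
    have h3 : K * Q = -(Q * (M * Q)) := by
      rw [hKQ, hQKQ, hTdef, Matrix.mul_assoc]
    have h4 : Lᴴ * L = star U * (Q * (M * Q)) * U := by
      rw [hLH, hL]
      simp only [Matrix.mul_assoc]
      rw [chain hRR]
    rw [h2, h3, h4]
    simp only [Matrix.mul_assoc, Matrix.neg_mul, Matrix.mul_neg]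
  have hQ'col : ∀ i, 0 < κ i → ∀ k, Q' k i = 0 := by
    intro i hi
    have hQii : Q' i i = ((∑ k, Complex.normSq (Q' k i) : ℝ) : ℂ) := by
      conv_lhs => rw [show Q' = Q'ᴴ * Q' from by rw [hQ'H, hQ'Q']]
      exact entry_conjTranspose_mul Q' i
    have hLii : (Lᴴ * L) i i = ((∑ k, Complex.normSq (L k i) : ℝ) : ℂ) :=
      entry_conjTranspose_mul L i
    have hdiag : (κ i : ℂ) * Q' i i = -((Lᴴ * L) i i) := by
      have h5 := congrFun (congrFun hDkQ' i) i
      have h6 : (Dk * Q') i i = (κ i : ℂ) * Q' i i := by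
        rw [hDk]; exact Matrix.diagonal_mul _ Q' i i
      calc (κ i : ℂ) * Q' i i = (Dk * Q') i i := h6.symm
      _ = (-(Lᴴ * L)) i i := h5
      _ = -((Lᴴ * L) i i) := by simp [Matrix.neg_apply]
    rw [hQii, hLii] at hdiag
    have hreal : κ i * (∑ k, Complex.normSq (Q' k i)) = -(∑ k, Complex.normSq (L k i)) := by
      exact_mod_cast hdiag
    have hs1 : 0 ≤ ∑ k, Complex.normSq (Q' k i) :=
      Finset.sum_nonneg fun k _ => Complex.normSq_nonneg _
    have hs2 : 0 ≤ ∑ k, Complex.normSq (L k i) :=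
      Finset.sum_nonneg fun k _ => Complex.normSq_nonneg _
    have hzero : (∑ k, Complex.normSq (Q' k i)) = 0 := by nlinarith
    intro k
    have hk := (Finset.sum_eq_zero_iff_of_nonneg
      (fun j _ => Complex.normSq_nonneg (Q' j i))).mp hzero k (Finset.mem_univ k)
    exact Complex.normSq_eq_zero.mp hk
  have hDpQ' : Dp * Q' = 0 := by
    ext i j
    rw [hDp, Matrix.diagonal_mul]
    show ((max (κ i) 0 : ℝ) : ℂ) * Q' i j = (0 : Matrix (Fin m) (Fin m) ℂ) i j
    rcases le_or_gt (κ i) 0 with h | h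
    · rw [max_eq_right h]
      simp
    · have hrow : Q' i j = 0 := by
        have h6 : Q'ᴴ i j = star (Q' j i) := Matrix.conjTranspose_apply Q' j i
        rw [hQ'H] at h6
        rw [h6, hQ'col i h j, star_zero]
      rw [hrow]
      simp
  have hKpQ : Kp * Q = 0 := by
    rw [hKpspec, Matrix.mul_assoc, Matrix.mul_assoc, hsUQ, ← Matrix.mul_assoc Dp Q' (star U),
      hDpQ', Matrix.zero_mul, Matrix.mul_zero]
  have hQKp : Q * Kp = 0 := by
    have h2 := congrArg conjTranspose hKpQ
    rwa [conjTranspose_mul, hQH, hKpH, conjTranspose_zero] at h2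
  have hPKp : P * Kp = Kp := by
    rw [hP1Q, Matrix.sub_mul, Matrix.one_mul, hQKp, sub_zero]
  have hKpP : Kp * P = Kp := by
    rw [hP1Q, Matrix.mul_sub, Matrix.mul_one, hKpQ, sub_zero]
  -- Kp - A is PSD
  have hWtKp : Wt * Kp = 0 := by
    rw [← hWtQ, Matrix.mul_assoc, hQKp, Matrix.mul_zero]
  have hKpWtH : Kp * Wtᴴ = 0 := by
    have h2 := congrArg conjTranspose hWtKp
    rwa [conjTranspose_mul, hKpH, conjTranspose_zero] at h2
  have hGinv : (1 - Wt) * G = 1 := by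
    have e : (1 - Wt) * (1 + Wt) = 1 + Wt - Wt - Wt * Wt := by noncomm_ring
    rw [hG, e, hWtWt]
    abel
  have hGinvH : Gᴴ * (1 - Wt)ᴴ = 1 := by
    have h2 := congrArg conjTranspose hGinv
    rwa [conjTranspose_mul, conjTranspose_one] at h2
  have hKpA : (Kp - A).PosSemidef := by
    have hid : Kp - A = (1 - Wt) * (Kp - K) * (1 - Wt)ᴴ := by
      have h1 : (1 - Wt) * Kp = Kp := by
        rw [Matrix.sub_mul, Matrix.one_mul, hWtKp, sub_zero]
      have h2 : Kp * (1 - Wt)ᴴ = Kp := by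
        rw [conjTranspose_sub, conjTranspose_one, Matrix.mul_sub, Matrix.mul_one, hKpWtH,
          sub_zero]
      have h3 : (1 - Wt) * K * (1 - Wt)ᴴ = A := by
        rw [hKdef]
        calc (1 - Wt) * (G * A * Gᴴ) * (1 - Wt)ᴴ
            = ((1 - Wt) * G) * (A * (Gᴴ * (1 - Wt)ᴴ)) := by simp only [Matrix.mul_assoc]
        _ = A := by rw [hGinv, hGinvH, Matrix.one_mul, Matrix.mul_one]
      calc Kp - A = (1 - Wt) * Kp * (1 - Wt)ᴴ - (1 - Wt) * K * (1 - Wt)ᴴ := by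
            rw [h1, h2, h3]
      _ = (1 - Wt) * (Kp - K) * (1 - Wt)ᴴ := by
            noncomm_ring
    rw [hid]
    exact hKpKps.mul_mul_conjTranspose_same (1 - Wt)
  -- construct X1
  refine ⟨B1ᴴ * (Npinv * Kp * Npinv) * B1, ?_, ?_, ?_⟩
  · -- Hermitian
    show (B1ᴴ * (Npinv * Kp * Npinv) * B1)ᴴ = B1ᴴ * (Npinv * Kp * Npinv) * B1
    simp only [conjTranspose_mul, conjTranspose_conjTranspose, hNpH, hKpH]
    simp only [Matrix.mul_assoc]
  · -- solution
    have hB1X1 : B1 * (B1ᴴ * (Npinv * Kp * Npinv) * B1) * B1ᴴ = Kp := by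
      calc B1 * (B1ᴴ * (Npinv * Kp * Npinv) * B1) * B1ᴴ
          = (B1 * B1ᴴ) * (Npinv * Kp * Npinv) * (B1 * B1ᴴ) := by
            simp only [Matrix.mul_assoc]
      _ = N * (Npinv * Kp * Npinv) * N := by rw [← hNdef]
      _ = (N * Npinv) * (Kp * (Npinv * N)) := by simp only [Matrix.mul_assoc]
      _ = P * (Kp * P) := by rw [hNNp, hNpN]
      _ = Kp := by rw [hKpP, hPKp]
    rw [hB1X1]
    exact hKpA
  · -- rank bound
    have hr1 : (B1ᴴ * (Npinv * Kp * Npinv) * B1).rank ≤ Kp.rank := by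
      have hgroup : B1ᴴ * (Npinv * Kp * Npinv) * B1
          = ((B1ᴴ * Npinv) * Kp) * (Npinv * B1) := by simp only [Matrix.mul_assoc]
      rw [hgroup]
      exact (Matrix.rank_mul_le_left _ _).trans (Matrix.rank_mul_le_right _ _)
    have hr2 : Kp.rank ≤ Fintype.card {i // 0 < κ i} := by
      rw [hKp]
      refine (spec_rank_le hKH _).trans_eq ?_
      refine Fintype.card_congr (Equiv.subtypeEquivRight fun i => ?_)
      constructor
      · intro h
        rcases lt_or_ge 0 (κ i) with h' | h'
        · exact h'
        · exact absurd (max_eq_right h') h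
      · intro h
        rw [max_eq_left h.le]
        exact ne_of_gt h
    have hr3 : Fintype.card {i // 0 < κ i} ≤ Fintype.card {i // 0 < hA.eigenvalues i} := by
      have hcong : Fintype.card {i // 0 < κ i}
          = Fintype.card {i // 0 < hKH.eigenvalues i} := by
        refine Fintype.card_congr (Equiv.subtypeEquivRight fun i => ?_)
        rw [hκ]
      rw [hcong]
      refine card_le_posCard hA (Gᴴ * posV hKH) ?_
      have hiden : (Gᴴ * posV hKH)ᴴ * A * (Gᴴ * posV hKH) = (posV hKH)ᴴ * K * posV hKH := by
        have e0 : (posV hKH)ᴴ * K * posV hKH = (posV hKH)ᴴ * (G * A * Gᴴ) * posV hKH :=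
          congrArg (fun z => (posV hKH)ᴴ * z * posV hKH) hKdef
        rw [conjTranspose_mul, conjTranspose_conjTranspose, e0]
        simp only [Matrix.mul_assoc]
      rw [hiden]
      exact posV_posDef hKH
    exact hr1.trans (hr2.trans hr3)

end LMIHelper

theorem lmi_min_rank_solution {m n : ℕ} (A : Matrix (Fin m) (Fin m) ℂ)
    (B : Matrix (Fin m) (Fin n) ℂ) (hA : A.IsHermitian)
    (hcons : ∃ X : Matrix (Fin n) (Fin n) ℂ, X.IsHermitian ∧ (B * X * Bᴴ - A).PosSemidef) :
    IsLeast {r : ℕ | ∃ X : Matrix (Fin n) (Fin n) ℂ, X.IsHermitian ∧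
        (B * X * Bᴴ - A).PosSemidef ∧ r = X.rank} (iPos A) ∧
    (∃ X : Matrix (Fin n) (Fin n) ℂ, X.PosDef ∧ (B * X * Bᴴ - A).PosSemidef) := by
  classical
  obtain ⟨X₀, hX₀H, hX₀sol⟩ := hcons
  have hX0sq : (X₀ * X₀).PosSemidef := by
    have h := Matrix.posSemidef_conjTranspose_mul_self X₀
    rwa [hX₀H.eq] at h
  have hY : (X₀ * X₀ + 1).PosDef := Matrix.PosDef.posSemidef_add hX0sq Matrix.PosDef.one
  have hquad := LMIHelper.quad_posSemidef hX₀H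
  have hYsol : (B * (X₀ * X₀ + 1) * Bᴴ - A).PosSemidef := by
    have hdecomp : B * (X₀ * X₀ + 1) * Bᴴ - A
        = (B * X₀ * Bᴴ - A) + B * (X₀ * X₀ - X₀ + 1) * Bᴴ := by
      simp only [Matrix.mul_add, Matrix.add_mul, Matrix.mul_sub, Matrix.sub_mul,
        Matrix.mul_one]
      abel
    rw [hdecomp]
    exact hX₀sol.add (hquad.mul_mul_conjTranspose_same B)
  have hYH : (X₀ * X₀ + 1).IsHermitian := hY.1
  obtain ⟨S, hSdef⟩ : ∃ x, x = LMIHelper.spec hYH (fun i => Real.sqrt (hYH.eigenvalues i)) :=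
    ⟨_, rfl⟩
  have hSH : Sᴴ = S := by rw [hSdef]; exact LMIHelper.spec_conjTranspose hYH _
  have hSS : S * S = X₀ * X₀ + 1 := by
    have e : ((fun i => Real.sqrt (hYH.eigenvalues i)) * fun i => Real.sqrt (hYH.eigenvalues i))
        = hYH.eigenvalues := by
      funext i
      exact Real.mul_self_sqrt (hY.posSemidef.eigenvalues_nonneg i)
    rw [hSdef, LMIHelper.spec_mul, e, LMIHelper.spec_eigenvalues]
  have hB1 : (B * S) * (B * S)ᴴ = B * (X₀ * X₀ + 1) * Bᴴ := by
    rw [conjTranspose_mul, hSH]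
    calc B * S * (S * Bᴴ) = B * (S * S) * Bᴴ := by simp only [Matrix.mul_assoc]
    _ = B * (X₀ * X₀ + 1) * Bᴴ := by rw [hSS]
  have hM1 : ((B * S) * (B * S)ᴴ - A).PosSemidef := by rw [hB1]; exact hYsol
  obtain ⟨X1, hX1H, hX1sol, hX1rank⟩ := LMIHelper.exists_low_rank_solution hA hM1
  have hXH : (S * X1 * S).IsHermitian := by
    show (S * X1 * S)ᴴ = S * X1 * S
    rw [conjTranspose_mul, conjTranspose_mul, hSH, hX1H.eq, Matrix.mul_assoc]
  have hXsol : (B * (S * X1 * S) * Bᴴ - A).PosSemidef := by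
    have e : B * (S * X1 * S) * Bᴴ = (B * S) * X1 * (B * S)ᴴ := by
      rw [conjTranspose_mul, hSH]
      simp only [Matrix.mul_assoc]
    rw [e]
    exact hX1sol
  have hcard : iPos A = Fintype.card {i // 0 < hA.eigenvalues i} := by
    simp only [iPos, dif_pos hA, Nat.card_eq_fintype_card]
  have hlow : ∀ X' : Matrix (Fin n) (Fin n) ℂ, (B * X' * Bᴴ - A).PosSemidef →
      iPos A ≤ X'.rank := by
    intro X' h
    rw [hcard]
    exact LMIHelper.posCard_le_rank hA h
  have hXrank : (S * X1 * S).rank ≤ iPos A := by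
    rw [hcard]
    refine le_trans ?_ hX1rank
    calc (S * X1 * S).rank ≤ (S * X1).rank := Matrix.rank_mul_le_left _ _
    _ ≤ X1.rank := Matrix.rank_mul_le_right _ _
  have heq : iPos A = (S * X1 * S).rank := le_antisymm (hlow _ hXsol) hXrank
  refine ⟨⟨⟨S * X1 * S, hXH, hXsol, heq⟩, ?_⟩, ⟨X₀ * X₀ + 1, hY, hYsol⟩⟩
  rintro r ⟨X', hX'H, hX'sol, rfl⟩
  exact hlow X' hX'sol
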